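/- arXiv:2001.07346 — 5 statements merged into one kernel-verified Lean document; each statement's English description precedes it below -/
import Mathlib

section
/- Let C be a nonempty closed convex subset of a real Hilbert space H, T: C → C nonexpansive with Fix(T) ≠ ∅, u ∈ C fixed, and sequences {ψₙ}, {νₙ} ⊂ (0,1), {δₙ} ⊂ [0,∞) satisfying: (D1) νₙ → 0 and ∑νₙ = ∞; (D2) (δₙ/νₙ)‖xₙ − xₙ₋₁‖ → 0. Then the sequence defined by wₙ = xₙ + δₙ(xₙ − xₙ₋₁), yₙ = ψₙwₙ + (1−ψₙ)Twₙ, xₙ₊₁ = νₙu + (1−νₙ)yₙ converges strongly to p = P_{Fix(T)}u, where P_{Fix(T)} is the metric projection onto Fix(T), provided additionally ψₙ(1−ψₙ) is bounded away from 0 along the relevant subsequences (e.g. {ψₙ} ⊂ [a,b] ⊂ (0,1)). -/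
open Filter Topology

local notation "⟪" x ", " y "⟫" => @inner ℝ _ _ x y

section AuxSequences

lemma tendsto_zero_of_le (A : ℕ → ℝ) (h0 : ∀ n, 0 ≤ A n)
    (h : ∀ ε > (0:ℝ), ∀ᶠ n in atTop, A n ≤ ε) : Tendsto A atTop (𝓝 0) := by
  rw [Metric.tendsto_atTop]
  intro ε hε
  obtain ⟨N, hN⟩ := (h (ε/2) (by linarith)).exists_forall_of_atTop
  exact ⟨N, fun n hn => by
    rw [Real.dist_eq, sub_zero, abs_of_nonneg (h0 n)]
    exact lt_of_le_of_lt (hN n hn) (by linarith)⟩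

lemma xu_lemma (A b' ν' : ℕ → ℝ) (hA0 : ∀ n, 0 ≤ A n)
    (hν : ∀ n, ν' n ∈ Set.Ioo (0:ℝ) 1) (hsum : ¬ Summable ν')
    (hrec : ∀ n, A (n+1) ≤ (1 - ν' n) * A n + ν' n * b' n)
    (hb : ∀ ε > (0:ℝ), ∀ᶠ n in atTop, b' n ≤ ε) : Tendsto A atTop (𝓝 0) := by
  apply tendsto_zero_of_le A hA0
  intro ε hε
  obtain ⟨N₁, hN₁⟩ := (hb (ε/2) (by linarith)).exists_forall_of_atTop
  set Q : ℕ → ℝ := fun n => ∏ k ∈ Finset.Ico N₁ n, (1 - ν' k) with hQ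
  have hQ0 : ∀ n, 0 ≤ Q n := fun n =>
    Finset.prod_nonneg fun k _ => by have := hν k; linarith [this.2]
  have hmain : ∀ n, N₁ ≤ n → A n ≤ ε/2 + Q n * A N₁ := by
    intro n hn
    induction n, hn using Nat.le_induction with
    | base => simp [hQ, Finset.Ico_self]; linarith [hA0 N₁]
    | succ n hn ih =>
      have h1 : A (n+1) ≤ (1 - ν' n) * A n + ν' n * (ε/2) := by
        have := hrec n
        have hb2 := hN₁ n hn
        have := (hν n).1
        nlinarith
      have h2 : (1 - ν' n) * A n ≤ (1 - ν' n) * (ε/2 + Q n * A N₁) := by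
        apply mul_le_mul_of_nonneg_left ih
        linarith [(hν n).2]
      have hQs : Q (n+1) = Q n * (1 - ν' n) := by
        rw [hQ]; exact Finset.prod_Ico_succ_top hn _
      rw [hQs]; nlinarith
  -- Q n → 0
  have hν0 : ∀ n, 0 ≤ ν' n := fun n => le_of_lt (hν n).1
  have hSum : Tendsto (fun n => ∑ k ∈ Finset.range n, ν' k) atTop atTop :=
    (not_summable_iff_tendsto_nat_atTop_of_nonneg hν0).1 hsum
  have hQle : ∀ n, N₁ ≤ n → Q n ≤ Real.exp (∑ k ∈ Finset.range N₁, ν' k - ∑ k ∈ Finset.range n, ν' k) := by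
    intro n hn
    have : ∑ k ∈ Finset.range N₁, ν' k - ∑ k ∈ Finset.range n, ν' k
        = - ∑ k ∈ Finset.Ico N₁ n, ν' k := by
      rw [Finset.sum_Ico_eq_sub _ hn]; ring
    rw [this]
    have : -∑ k ∈ Finset.Ico N₁ n, ν' k = ∑ k ∈ Finset.Ico N₁ n, (-ν' k) := by
      rw [Finset.sum_neg_distrib]
    rw [this, Real.exp_sum]
    apply Finset.prod_le_prod
    · intro k _; linarith [(hν k).2]
    · intro k _; linarith [Real.add_one_le_exp (-ν' k)]
  have hQ0' : Tendsto Q atTop (𝓝 0) := by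
    have hexp : Tendsto (fun n => Real.exp (∑ k ∈ Finset.range N₁, ν' k - ∑ k ∈ Finset.range n, ν' k)) atTop (𝓝 0) := by
      apply Real.tendsto_exp_atBot.comp
      apply tendsto_atBot_add_const_left
      exact (tendsto_neg_atBot_iff.2 hSum)
    apply squeeze_zero' (Eventually.of_forall hQ0) _ hexp
    filter_upwards [eventually_ge_atTop N₁] with n hn using hQle n hn
  have hQA : Tendsto (fun n => Q n * A N₁) atTop (𝓝 0) := by
    simpa using hQ0'.mul_const (A N₁)
  have hev : ∀ᶠ n in atTop, Q n * A N₁ ≤ ε/2 := by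
    have := (hQA.eventually (eventually_le_nhds (show (0:ℝ) < ε/2 by linarith)))
    filter_upwards [this] with n hn using hn
  filter_upwards [hev, eventually_ge_atTop N₁] with n h1 h2
  linarith [hmain n h2]


lemma mainge_lemma (A b c ν' : ℕ → ℝ)
    (hA0 : ∀ n, 0 ≤ A n) (hc0 : ∀ n, 0 ≤ c n)
    (hν : ∀ n, ν' n ∈ Set.Ioo (0:ℝ) 1) (hν0 : Tendsto ν' atTop (𝓝 0))
    (hsum : ¬ Summable ν')
    (hrec : ∀ n, A (n+1) ≤ (1 - ν' n) * A n + ν' n * b n - c n)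
    (Ab Bb : ℝ) (hAb : ∀ n, A n ≤ Ab) (hBb : ∀ n, |b n| ≤ Bb)
    (H : ∀ φ : ℕ → ℕ, Tendsto φ atTop atTop → Tendsto (fun k => c (φ k)) atTop (𝓝 0) →
      ∃ σ : ℕ → ℕ, StrictMono σ ∧ ∃ L ≤ (0:ℝ), Tendsto (fun k => b (φ (σ k))) atTop (𝓝 L)) :
    Tendsto A atTop (𝓝 0) := by
  have hBb0 : 0 ≤ Bb := le_trans (abs_nonneg _) (hBb 0)
  have hAb0 : 0 ≤ Ab := le_trans (hA0 0) (hAb 0)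
  -- upgraded form of H
  have H2 : ∀ φ : ℕ → ℕ, Tendsto φ atTop atTop →
      Tendsto (fun k => c (φ k)) atTop (𝓝 0) →
      ∀ ε > (0:ℝ), ∀ᶠ k in atTop, b (φ k) ≤ ε := by
    intro φ hφ hc ε hε
    by_contra hcon
    rw [Filter.not_eventually] at hcon
    have hfreq : ∃ᶠ k in atTop, ε < b (φ k) := by
      apply hcon.mono; intro k hk; linarith [not_le.1 hk]
    obtain ⟨σ0, hσ0, hσ0b⟩ := Filter.extraction_of_frequently_atTop hfreq
    obtain ⟨σ, hσ, L, hL, hLt⟩ := H (φ ∘ σ0) (hφ.comp hσ0.tendsto_atTop)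
      (hc.comp hσ0.tendsto_atTop)
    have : ε ≤ L := ge_of_tendsto hLt (Eventually.of_forall fun k => le_of_lt (hσ0b (σ k)))
    linarith
  by_cases hcase : ∃ N, ∀ n, N ≤ n → A (n+1) ≤ A n
  · -- Case 1: eventually nonincreasing
    obtain ⟨N, hN⟩ := hcase
    have hanti : Antitone (fun n => A (n + N)) :=
      antitone_nat_of_succ_le fun n => by
        have := hN (n + N) (by omega); simpa [Nat.add_right_comm] using this
    have hbdd : BddBelow (Set.range fun n => A (n + N)) :=
      ⟨0, fun x ⟨n, hn⟩ => hn ▸ hA0 _⟩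
    have hℓ := tendsto_atTop_ciInf hanti hbdd
    set ℓ := ⨅ n, A (n + N)
    have hA : Tendsto A atTop (𝓝 ℓ) := (tendsto_add_atTop_iff_nat N).1 hℓ
    have hA1 : Tendsto (fun n => A (n + 1)) atTop (𝓝 ℓ) := (tendsto_add_atTop_iff_nat 1).2 hA
    have hdiff : Tendsto (fun n => A n - A (n + 1)) atTop (𝓝 0) := by
      simpa using hA.sub hA1
    have hcto : Tendsto c atTop (𝓝 0) := by
      apply squeeze_zero' (Eventually.of_forall hc0)
        (g := fun n => (A n - A (n+1)) + ν' n * (Bb + Ab))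
      · apply Eventually.of_forall; intro n
        have h1 := hrec n
        have h2 := (hν n).1
        have h3 := abs_le.1 (hBb n)
        have h4 := hA0 n
        have h5 := hAb n
        nlinarith
      · simpa using hdiff.add (hν0.mul_const (Bb + Ab))
    have hb := H2 id tendsto_id (by simpa using hcto)
    apply xu_lemma A b ν' hA0 hν hsum _ hb
    intro n; have := hrec n; have := hc0 n; linarith
  · -- Case 2
    push_neg at hcase
    classical
    set P : ℕ → Prop := fun k => A k < A (k + 1) with hP
    have hdec : DecidablePred P := Classical.decPred P
    set τ : ℕ → ℕ := fun n => Nat.findGreatest P n with hτ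
    obtain ⟨n₀, -, hPn₀⟩ := hcase 0
    have hτT : Tendsto τ atTop atTop := by
      rw [Filter.tendsto_atTop]
      intro N
      obtain ⟨n₁, hn₁, hPn₁⟩ := hcase N
      filter_upwards [eventually_ge_atTop n₁] with n hn
      exact le_trans hn₁ (Nat.le_findGreatest hn hPn₁)
    have hPτ : ∀ n, n₀ ≤ n → P (τ n) := fun n hn => Nat.findGreatest_spec hn hPn₀
    have hτle : ∀ n, τ n ≤ n := fun n => Nat.findGreatest_le n
    have claim : ∀ n, n₀ ≤ n → A n ≤ A (τ n + 1) := by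
      intro n hn
      rcases eq_or_lt_of_le (hτle n) with heq | hlt
      · have h : A (τ n) < A (τ n + 1) := hPτ n hn
        rw [heq] at h ⊢
        exact le_of_lt h
      · have key : ∀ k, τ n + 1 ≤ k → k ≤ n → A k ≤ A (τ n + 1) := by
          intro k hk1
          induction k, hk1 using Nat.le_induction with
          | base => intro _; exact le_rfl
          | succ k hk ih =>
            intro hkn
            have h1 : ¬ P k := Nat.findGreatest_is_greatest (P := P) (n := n) (k := k) (show τ n < k by omega) (by omega)
            have h2 : A (k + 1) ≤ A k := not_lt.1 h1
            exact le_trans h2 (ih (by omega))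
        exact key n (by omega) le_rfl
    have hab : ∀ n, n₀ ≤ n → A (τ n) < b (τ n) := by
      intro n hn
      have h1 : A (τ n) < A (τ n + 1) := hPτ n hn
      have h2 := hrec (τ n)
      have h3 := hc0 (τ n)
      have h4 := (hν (τ n)).1
      nlinarith
    have hντ : Tendsto (fun n => ν' (τ n)) atTop (𝓝 0) := hν0.comp hτT
    have hcτ : Tendsto (fun n => c (τ n)) atTop (𝓝 0) := by
      apply squeeze_zero' (Eventually.of_forall fun n => hc0 _)
        (g := fun n => ν' (τ n) * (Bb + Ab))
      · filter_upwards [eventually_ge_atTop n₀] with n hn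
        have h1 : A (τ n) < A (τ n + 1) := hPτ n hn
        have h2 := hrec (τ n)
        have h3 := abs_le.1 (hBb (τ n))
        have h4 := hA0 (τ n)
        have h5 := hAb (τ n)
        have h6 := (hν (τ n)).1
        nlinarith
      · simpa using hντ.mul_const (Bb + Ab)
    have hbτ := H2 τ hτT hcτ
    have hAτ : Tendsto (fun n => A (τ n)) atTop (𝓝 0) := by
      apply tendsto_zero_of_le _ (fun n => hA0 _)
      intro ε hε
      filter_upwards [hbτ ε hε, eventually_ge_atTop n₀] with n h1 h2
      exact le_of_lt (lt_of_lt_of_le (hab n h2) h1)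
    have hAτ1 : Tendsto (fun n => A (τ n + 1)) atTop (𝓝 0) := by
      apply squeeze_zero' (Eventually.of_forall fun n => hA0 _)
        (g := fun n => A (τ n) + ν' (τ n) * Bb)
      · apply Eventually.of_forall; intro n
        have h1 := hrec (τ n)
        have h2 := hc0 (τ n)
        have h3 := abs_le.1 (hBb (τ n))
        have h4 := hA0 (τ n)
        have h5 := (hν (τ n)).1
        nlinarith
      · simpa using hAτ.add (hντ.mul_const Bb)
    apply squeeze_zero' (Eventually.of_forall hA0)
      (g := fun n => A (τ n + 1)) _ hAτ1
    filter_upwards [eventually_ge_atTop n₀] with n hn using claim n hn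

end AuxSequences

section AuxHilbert

lemma exists_weak_subseq {H : Type*} [NormedAddCommGroup H] [InnerProductSpace ℝ H]
    [CompleteSpace H] (v : ℕ → H) (B : ℝ) (hB : ∀ k, ‖v k‖ ≤ B) :
    ∃ z : H, ∃ σ : ℕ → ℕ, StrictMono σ ∧
      ∀ m : H, Tendsto (fun k => ⟪m, v (σ k)⟫) atTop (𝓝 ⟪m, z⟫) := by
  have hB0 : (0:ℝ) ≤ B := le_trans (norm_nonneg _) (hB 0)
  -- diagonal extraction via sequential compactness of a product of intervals
  set g : ℕ → (ℕ → ℝ) := fun k j => ⟪v j, v k⟫ with hg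
  have hmem : ∀ k, g k ∈ Set.univ.pi (fun _ : ℕ => Set.Icc (-(B*B)) (B*B)) := by
    intro k j _
    have h1 : |⟪v j, v k⟫| ≤ ‖v j‖ * ‖v k‖ := abs_real_inner_le_norm _ _
    have h2 : ‖v j‖ * ‖v k‖ ≤ B * B :=
      mul_le_mul (hB j) (hB k) (norm_nonneg _) hB0
    exact abs_le.1 (le_trans h1 h2)
  have hK : IsCompact (Set.univ.pi (fun _ : ℕ => Set.Icc (-(B*B)) (B*B))) :=
    isCompact_univ_pi fun _ => isCompact_Icc
  obtain ⟨f, _, σ, hσ, hgf⟩ := hK.isSeqCompact hmem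
  have hpt : ∀ j, Tendsto (fun k => ⟪v j, v (σ k)⟫) atTop (𝓝 (f j)) := by
    intro j
    exact (tendsto_pi_nhds.1 hgf) j
  -- the span and its closure
  set S : Submodule ℝ H := Submodule.span ℝ (Set.range v) with hS
  set M : Submodule ℝ H := S.topologicalClosure with hM
  haveI : CompleteSpace M := (Submodule.isClosed_topologicalClosure S).completeSpace_coe
  have hvM : ∀ j, v j ∈ M :=
    fun j => S.le_topologicalClosure (Submodule.subset_span ⟨j, rfl⟩)
  -- limits exist on the span
  have hspan : ∀ m ∈ S, ∃ L, Tendsto (fun k => ⟪m, v (σ k)⟫) atTop (𝓝 L) := by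
    intro m hm
    induction hm using Submodule.span_induction with
    | mem m hmem' => obtain ⟨j, rfl⟩ := hmem'; exact ⟨f j, hpt j⟩
    | zero => exact ⟨0, by simpa using tendsto_const_nhds⟩
    | add m m' _ _ ihm ihm' =>
      obtain ⟨L, hL⟩ := ihm; obtain ⟨L', hL'⟩ := ihm'
      exact ⟨L + L', by simpa [inner_add_left] using hL.add hL'⟩
    | smul t m _ ihm =>
      obtain ⟨L, hL⟩ := ihm
      exact ⟨t * L, by simpa [real_inner_smul_left] using hL.const_mul t⟩
  -- limits exist on the closure, via a Cauchy argument
  have hclos : ∀ m ∈ M, ∃ L, Tendsto (fun k => ⟪m, v (σ k)⟫) atTop (𝓝 L) := by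
    intro m hm
    have hcauchy : CauchySeq (fun k => ⟪m, v (σ k)⟫) := by
      rw [Metric.cauchySeq_iff]
      intro ε hε
      have hm' : m ∈ closure (S : Set H) := hm
      obtain ⟨m', hm'S, hdist⟩ := Metric.mem_closure_iff.1 hm' (ε / (4 * B + 1))
        (by positivity)
      obtain ⟨L, hL⟩ := hspan m' hm'S
      have hc : CauchySeq (fun k => ⟪m', v (σ k)⟫) := hL.cauchySeq
      obtain ⟨N, hN⟩ := Metric.cauchySeq_iff.1 hc (ε / 2) (by linarith)
      refine ⟨N, fun k hk l hl => ?_⟩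
      have key : ∀ i : ℕ, |⟪m, v (σ i)⟫ - ⟪m', v (σ i)⟫| ≤ ε / 4 := by
        intro i
        rw [← inner_sub_left]
        calc |⟪m - m', v (σ i)⟫| ≤ ‖m - m'‖ * ‖v (σ i)‖ := abs_real_inner_le_norm _ _
          _ ≤ ε / (4 * B + 1) * B := by
              apply mul_le_mul _ (hB _) (norm_nonneg _) (by positivity)
              rw [← dist_eq_norm]; exact le_of_lt hdist
          _ ≤ ε / 4 := by
              rw [div_mul_eq_mul_div, div_le_div_iff₀ (by positivity) (by norm_num)]
              nlinarith
      have h1 := key k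
      have h2 := key l
      have h3 := hN k hk l hl
      rw [Real.dist_eq] at h3 ⊢
      have : ⟪m, v (σ k)⟫ - ⟪m, v (σ l)⟫ =
          (⟪m, v (σ k)⟫ - ⟪m', v (σ k)⟫) + (⟪m', v (σ k)⟫ - ⟪m', v (σ l)⟫)
          - (⟪m, v (σ l)⟫ - ⟪m', v (σ l)⟫) := by ring
      rw [this]
      calc |_| ≤ |⟪m, v (σ k)⟫ - ⟪m', v (σ k)⟫| + |⟪m', v (σ k)⟫ - ⟪m', v (σ l)⟫|
            + |⟪m, v (σ l)⟫ - ⟪m', v (σ l)⟫| := by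
              exact (abs_sub _ _).trans (by gcongr; exact abs_add_le _ _)
        _ < ε := by linarith
    exact cauchySeq_tendsto_of_complete hcauchy
  -- limits exist everywhere, via orthogonal projection
  have hall : ∀ m : H, ∃ L, Tendsto (fun k => ⟪m, v (σ k)⟫) atTop (𝓝 L) := by
    intro m
    have hproj : ∀ j, ⟪m, v j⟫ = ⟪(M.orthogonalProjectionOnto m : H), v j⟫ := by
      intro j
      have horth : m - (M.orthogonalProjectionOnto m : H) ∈ Mᗮ :=
        by have := M.sub_starProjection_mem_orthogonal m; rwa [Submodule.starProjection_apply] at this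
      have h0 : ⟪v j, m - (M.orthogonalProjectionOnto m : H)⟫ = 0 :=
        horth (v j) (hvM j)
      rw [inner_sub_right] at h0
      rw [real_inner_comm m (v j), real_inner_comm ((M.orthogonalProjectionOnto m : H)) (v j)] at *
      linarith
    obtain ⟨L, hL⟩ := hclos (M.orthogonalProjectionOnto m : H) (M.orthogonalProjectionOnto m).2
    exact ⟨L, by simpa only [← hproj] using hL⟩
  -- build the limit functional
  choose L hL using hall
  have hLadd : ∀ m m' : H, L (m + m') = L m + L m' := by
    intro m m'
    refine tendsto_nhds_unique (hL (m + m')) ?_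
    simpa [inner_add_left] using (hL m).add (hL m')
  have hLsmul : ∀ (t : ℝ) (m : H), L (t • m) = t * L m := by
    intro t m
    refine tendsto_nhds_unique (hL (t • m)) ?_
    simpa [real_inner_smul_left] using (hL m).const_mul t
  have hLbound : ∀ m : H, |L m| ≤ B * ‖m‖ := by
    intro m
    have h1 : Tendsto (fun k => |⟪m, v (σ k)⟫|) atTop (𝓝 |L m|) := (hL m).abs
    apply le_of_tendsto h1
    apply Eventually.of_forall
    intro k
    calc |⟪m, v (σ k)⟫| ≤ ‖m‖ * ‖v (σ k)‖ := abs_real_inner_le_norm _ _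
      _ ≤ ‖m‖ * B := mul_le_mul_of_nonneg_left (hB _) (norm_nonneg _)
      _ = B * ‖m‖ := mul_comm _ _
  let F : H →ₗ[ℝ] ℝ :=
    { toFun := L
      map_add' := hLadd
      map_smul' := hLsmul }
  let F' : H →L[ℝ] ℝ := F.mkContinuous B (fun m => by
    simpa [Real.norm_eq_abs, F] using hLbound m)
  set z : H := (InnerProductSpace.toDual ℝ H).symm F' with hz
  refine ⟨z, σ, hσ, fun m => ?_⟩
  have h1 : ⟪z, m⟫ = F' m := InnerProductSpace.toDual_symm_apply
  have h2 : (F' m : ℝ) = L m := rfl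
  have h3 : ⟪m, z⟫ = L m := (real_inner_comm z m).trans (h1.trans h2)
  exact h3 ▸ hL m

variable {H : Type*} [NormedAddCommGroup H] [InnerProductSpace ℝ H]

lemma combo_norm_sq (t : ℝ) (a b : H) :
    ‖t • a + (1 - t) • b‖^2
      = t * ‖a‖^2 + (1 - t) * ‖b‖^2 - t * (1 - t) * ‖a - b‖^2 := by
  have h1 : ‖t • a + (1 - t) • b‖^2
      = ‖t • a‖^2 + 2 * ⟪t • a, (1 - t) • b⟫ + ‖(1 - t) • b‖^2 := norm_add_sq_real _ _
  have h2 : ‖a - b‖^2 = ‖a‖^2 - 2 * ⟪a, b⟫ + ‖b‖^2 := norm_sub_sq_real _ _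
  have h3 : ⟪t • a, (1 - t) • b⟫ = t * (1 - t) * ⟪a, b⟫ := by
    rw [real_inner_smul_left, real_inner_smul_right]; ring
  have h4 : ‖t • a‖^2 = t^2 * ‖a‖^2 := by
    rw [norm_smul, mul_pow, Real.norm_eq_abs, sq_abs]
  have h5 : ‖(1 - t) • b‖^2 = (1 - t)^2 * ‖b‖^2 := by
    rw [norm_smul, mul_pow, Real.norm_eq_abs, sq_abs]
  rw [h1, h3, h4, h5]; nlinarith [h2]

lemma norm_add_sq_le (c d : H) : ‖c + d‖^2 ≤ ‖c‖^2 + 2 * ⟪d, c + d⟫ := by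
  have h1 : ‖c + d‖^2 = ‖c‖^2 + 2 * ⟪c, d⟫ + ‖d‖^2 := norm_add_sq_real _ _
  have h2 : ⟪d, c + d⟫ = ⟪d, c⟫ + ⟪d, d⟫ := inner_add_right _ _ _
  have h3 : ⟪d, d⟫ = ‖d‖^2 := real_inner_self_eq_norm_sq d
  have h4 : ⟪c, d⟫ = ⟪d, c⟫ := real_inner_comm d c
  nlinarith [sq_nonneg ‖d‖]

lemma midpoint_fixed {C : Set H} (hCv : Convex ℝ C)
    (T : H → H) (hTC : Set.MapsTo T C C)
    (hT : ∀ x ∈ C, ∀ y ∈ C, ‖T x - T y‖ ≤ ‖x - y‖)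
    {q r : H} (hq : q ∈ C) (hr : r ∈ C) (hTq : T q = q) (hTr : T r = r) :
    (2:ℝ)⁻¹ • (q + r) ∈ C ∧ T ((2:ℝ)⁻¹ • (q + r)) = (2:ℝ)⁻¹ • (q + r) := by
  set m : H := (2:ℝ)⁻¹ • (q + r) with hm
  have hmC : m ∈ C := by
    have h := hCv hq hr (by norm_num : (0:ℝ) ≤ 2⁻¹) (by norm_num : (0:ℝ) ≤ 2⁻¹) (by norm_num)
    have : (2:ℝ)⁻¹ • q + (2:ℝ)⁻¹ • r = m := by rw [hm, smul_add]
    rwa [this] at h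
  refine ⟨hmC, ?_⟩
  have hmq : m - q = (2:ℝ)⁻¹ • (r - q) := by rw [hm]; module
  have hmr : m - r = (2:ℝ)⁻¹ • (q - r) := by rw [hm]; module
  have hhalf : ∀ e : H, ‖(2:ℝ)⁻¹ • e‖ = ‖e‖ / 2 := by
    intro e
    rw [norm_smul, Real.norm_eq_abs, abs_of_pos (by norm_num : (0:ℝ) < 2⁻¹)]
    ring
  have h1 : ‖T m - q‖ ≤ ‖r - q‖ / 2 := by
    have h := hT m hmC q hq
    rw [hTq] at h
    apply h.trans
    rw [hmq, hhalf]
  have h2 : ‖T m - r‖ ≤ ‖r - q‖ / 2 := by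
    have h := hT m hmC r hr
    rw [hTr] at h
    apply h.trans
    rw [hmr, hhalf, norm_sub_rev]
  have hpar := parallelogram_law_with_norm ℝ (T m - q) (T m - r)
  have he1 : T m - q + (T m - r) = (2:ℝ) • (T m - m) := by rw [hm]; module
  have he2 : T m - q - (T m - r) = r - q := by abel
  rw [he1, he2] at hpar
  have h3 : ‖(2:ℝ) • (T m - m)‖ = 2 * ‖T m - m‖ := by
    rw [norm_smul, Real.norm_eq_abs, abs_of_pos (by norm_num : (0:ℝ) < 2)]
  rw [h3] at hpar
  have h4 : ‖T m - m‖ = 0 := by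
    have hq0 := norm_nonneg (T m - q)
    have hr0 := norm_nonneg (T m - r)
    have hn0 := norm_nonneg (T m - m)
    nlinarith
  have h5 : T m - m = 0 := norm_eq_zero.1 h4
  exact sub_eq_zero.1 h5

lemma vi_of_proj {C : Set H} (hCv : Convex ℝ C)
    (T : H → H) (hTC : Set.MapsTo T C C)
    (hT : ∀ x ∈ C, ∀ y ∈ C, ‖T x - T y‖ ≤ ‖x - y‖)
    (u p : H) (hpC : p ∈ C) (hp : T p = p)
    (hproj : ∀ q ∈ C, T q = q → ‖u - p‖ ≤ ‖u - q‖)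
    {q : H} (hq : q ∈ C) (hTq : T q = q) : ⟪u - p, q - p⟫ ≤ 0 := by
  set e : ℕ → H := fun k => p + ((2:ℝ)⁻¹)^k • (q - p) with he
  have hek : ∀ k, e k ∈ C ∧ T (e k) = e k := by
    intro k
    induction k with
    | zero => simpa [he] using ⟨hq, hTq⟩
    | succ k ih =>
      have hstep : e (k+1) = (2:ℝ)⁻¹ • (p + e k) := by
        simp only [he, pow_succ]; module
      have := midpoint_fixed hCv T hTC hT hpC ih.1 hp ih.2
      rw [← hstep] at this
      exact this
  have hkey : ∀ k : ℕ, ⟪u - p, q - p⟫ ≤ ((2:ℝ)⁻¹)^k / 2 * ‖q - p‖^2 := by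
    intro k
    set t : ℝ := ((2:ℝ)⁻¹)^k with ht
    have ht0 : 0 < t := pow_pos (by norm_num) k
    have h1 : ‖u - p‖ ≤ ‖u - e k‖ := hproj (e k) (hek k).1 (hek k).2
    have h2 : u - e k = (u - p) - t • (q - p) := by rw [he]; simp only; module
    have h3 : ‖u - e k‖^2 = ‖u - p‖^2 - 2 * (t * ⟪u - p, q - p⟫) + t^2 * ‖q - p‖^2 := by
      rw [h2, norm_sub_sq_real, real_inner_smul_right, norm_smul, Real.norm_eq_abs,
        abs_of_pos ht0, mul_pow]
    have h4 : ‖u - p‖^2 ≤ ‖u - e k‖^2 := by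
      apply pow_le_pow_left₀ (norm_nonneg _) h1
    rw [h3] at h4
    have h5 : 2 * (t * ⟪u - p, q - p⟫) ≤ t^2 * ‖q - p‖^2 := by linarith
    calc ⟪u - p, q - p⟫ = t⁻¹ * (2 * (t * ⟪u - p, q - p⟫)) / 2 := by
          field_simp
      _ ≤ t⁻¹ * (t^2 * ‖q - p‖^2) / 2 := by linarith [mul_le_mul_of_nonneg_left h5 (le_of_lt (by positivity : (0:ℝ) < t⁻¹))]
      _ = t / 2 * ‖q - p‖^2 := by field_simp
  have htend : Tendsto (fun k : ℕ => ((2:ℝ)⁻¹)^k / 2 * ‖q - p‖^2) atTop (𝓝 0) := by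
    have h := tendsto_pow_atTop_nhds_zero_of_lt_one (by norm_num : (0:ℝ) ≤ 2⁻¹)
      (by norm_num : (2:ℝ)⁻¹ < 1)
    simpa using (h.div_const 2).mul_const (‖q - p‖^2)
  exact ge_of_tendsto htend (Eventually.of_forall hkey)

lemma weak_limit_fixed {C : Set H} [CompleteSpace H] (hC : C.Nonempty) (hCc : IsClosed C)
    (hCv : Convex ℝ C)
    (T : H → H) (hT : ∀ x ∈ C, ∀ y ∈ C, ‖T x - T y‖ ≤ ‖x - y‖)
    (v : ℕ → H) (hvC : ∀ k, v k ∈ C) (B : ℝ) (hvB : ∀ k, ‖v k‖ ≤ B)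
    (z : H) (hweak : ∀ m : H, Tendsto (fun k => ⟪m, v k⟫) atTop (𝓝 ⟪m, z⟫))
    (hfx : Tendsto (fun k => ‖v k - T (v k)‖) atTop (𝓝 0)) :
    z ∈ C ∧ T z = z := by
  -- z ∈ C
  have hzC : z ∈ C := by
    obtain ⟨v₀, hv₀C, hmin⟩ := exists_norm_eq_iInf_of_complete_convex hC hCc.isComplete hCv z
    have hchar := (norm_eq_iInf_iff_real_inner_le_zero hCv hv₀C).1 hmin
    have hlim : Tendsto (fun k => ⟪z - v₀, v k - v₀⟫) atTop (𝓝 (‖z - v₀‖^2)) := by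
      have h1 : Tendsto (fun k => ⟪z - v₀, v k⟫ - ⟪z - v₀, v₀⟫) atTop
          (𝓝 (⟪z - v₀, z⟫ - ⟪z - v₀, v₀⟫)) := (hweak (z - v₀)).sub_const _
      have h2 : ∀ k, ⟪z - v₀, v k - v₀⟫ = ⟪z - v₀, v k⟫ - ⟪z - v₀, v₀⟫ := fun k =>
        inner_sub_right _ _ _
      have h3 : (⟪z - v₀, z⟫ : ℝ) - ⟪z - v₀, v₀⟫ = ‖z - v₀‖^2 := by
        rw [← inner_sub_right, real_inner_self_eq_norm_sq]
      rw [← h3]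
      simpa [h2] using h1
    have h4 : ‖z - v₀‖^2 ≤ 0 :=
      le_of_tendsto hlim (Eventually.of_forall fun k => hchar (v k) (hvC k))
    have h5 : z - v₀ = 0 := by
      rw [← norm_eq_zero]
      nlinarith [norm_nonneg (z - v₀), sq_nonneg ‖z - v₀‖]
    rw [sub_eq_zero] at h5
    rwa [h5]
  refine ⟨hzC, ?_⟩
  -- demiclosedness
  set d : H := z - T z with hd
  have hBz : (0:ℝ) ≤ B := le_trans (norm_nonneg _) (hvB 0)
  have hvz : ∀ k, ‖v k - z‖ ≤ B + ‖z‖ := fun k =>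
    (norm_sub_le _ _).trans (by linarith [hvB k])
  have hkey : ∀ k, ‖d‖^2 ≤ ‖v k - T (v k)‖^2 + 2 * ‖v k - T (v k)‖ * (B + ‖z‖)
      - 2 * (⟪d, v k⟫ - ⟪d, z⟫) := by
    intro k
    have h1 : ‖v k - T z‖ ≤ ‖v k - T (v k)‖ + ‖v k - z‖ := by
      calc ‖v k - T z‖ ≤ ‖v k - T (v k)‖ + ‖T (v k) - T z‖ := by
            have : v k - T z = (v k - T (v k)) + (T (v k) - T z) := by abel
            rw [this]; exact norm_add_le _ _
        _ ≤ ‖v k - T (v k)‖ + ‖v k - z‖ := by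
            linarith [hT (v k) (hvC k) z hzC]
    have h2 : v k - T z = (v k - z) + d := by rw [hd]; abel
    have h3 : ‖v k - T z‖^2 = ‖v k - z‖^2 + 2 * ⟪v k - z, d⟫ + ‖d‖^2 := by
      rw [h2, norm_add_sq_real]
    have h4 : ‖v k - T z‖^2 ≤ (‖v k - T (v k)‖ + ‖v k - z‖)^2 :=
      pow_le_pow_left₀ (norm_nonneg _) h1 2
    have h5 : ⟪v k - z, d⟫ = ⟪d, v k⟫ - ⟪d, z⟫ := by
      rw [inner_sub_left, real_inner_comm d (v k), real_inner_comm d z]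
    have h6 := hvz k
    have h7 := norm_nonneg (v k - T (v k))
    have h8 := norm_nonneg (v k - z)
    nlinarith [sq_nonneg (‖v k - T (v k)‖ + ‖v k - z‖)]
  have htend : Tendsto (fun k => ‖v k - T (v k)‖^2 + 2 * ‖v k - T (v k)‖ * (B + ‖z‖)
      - 2 * (⟪d, v k⟫ - ⟪d, z⟫)) atTop (𝓝 0) := by
    have t1 : Tendsto (fun k => ‖v k - T (v k)‖^2) atTop (𝓝 0) := by
      simpa using hfx.pow 2
    have t2 : Tendsto (fun k => 2 * ‖v k - T (v k)‖ * (B + ‖z‖)) atTop (𝓝 0) := by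
      simpa using (hfx.const_mul 2).mul_const (B + ‖z‖)
    have t3 : Tendsto (fun k => (⟪d, v k⟫ : ℝ) - ⟪d, z⟫) atTop (𝓝 0) := by
      simpa using (hweak d).sub_const (⟪d, z⟫ : ℝ)
    simpa using (t1.add t2).sub (t3.const_mul 2)
  have h9 : ‖d‖^2 ≤ 0 := ge_of_tendsto htend (Eventually.of_forall hkey)
  have h10 : d = 0 := by
    rw [← norm_eq_zero]
    nlinarith [norm_nonneg d]
  rw [hd, sub_eq_zero] at h10
  exact h10.symm

end AuxHilbert

set_option maxHeartbeats 2000000 in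
/-- Strong convergence of the modified inertial Mann–Halpern algorithm:
`wₙ = xₙ + δₙ(xₙ - xₙ₋₁)`, `yₙ = ψₙwₙ + (1-ψₙ)Twₙ`, `xₙ₊₁ = νₙu + (1-νₙ)yₙ`
converges strongly to `p = P_{Fix(T)} u` under (D1), (D2) and
`{ψₙ} ⊆ [a,b] ⊆ (0,1)`. -/
theorem stmt_0 {H : Type*} [NormedAddCommGroup H] [InnerProductSpace ℝ H] [CompleteSpace H]
    (C : Set H) (hC : C.Nonempty) (hCc : IsClosed C) (hCv : Convex ℝ C)
    (T : H → H) (hTC : Set.MapsTo T C C)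
    (hT : ∀ x ∈ C, ∀ y ∈ C, ‖T x - T y‖ ≤ ‖x - y‖)
    (hfix : ∃ q ∈ C, T q = q)
    (u : H) (huC : u ∈ C)
    (ψ ν δ : ℕ → ℝ) (a b : ℝ) (hab : 0 < a) (hba : a ≤ b) (hb1 : b < 1)
    (hψ : ∀ n, ψ n ∈ Set.Icc a b)
    (hν : ∀ n, ν n ∈ Set.Ioo (0 : ℝ) 1) (hδ : ∀ n, 0 ≤ δ n)
    -- (D1)
    (hν0 : Tendsto ν atTop (𝓝 0)) (hνsum : ¬ Summable ν)
    (x w y : ℕ → H)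
    (hxC : ∀ n, x n ∈ C) (hwC : ∀ n, w n ∈ C)
    -- the algorithm (`x 0` plays the role of `x₋₁` and `x 1` that of `x₀`)
    (hw : ∀ n, w (n + 1) = x (n + 1) + δ (n + 1) • (x (n + 1) - x n))
    (hy : ∀ n, y (n + 1) = ψ (n + 1) • w (n + 1) + (1 - ψ (n + 1)) • T (w (n + 1)))
    (hx : ∀ n, x (n + 2) = ν (n + 1) • u + (1 - ν (n + 1)) • y (n + 1))
    -- (D2)
    (hD2 : Tendsto (fun n => δ (n + 1) / ν (n + 1) * ‖x (n + 1) - x n‖) atTop (𝓝 0))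
    -- `p` is the metric projection of `u` onto `Fix(T)`
    (p : H) (hpC : p ∈ C) (hp : T p = p)
    (hproj : ∀ q ∈ C, T q = q → ‖u - p‖ ≤ ‖u - q‖) :
    Tendsto x atTop (𝓝 p) := by
  -- shifted parameter sequence
  set ν' : ℕ → ℝ := fun n => ν (n + 1) with hν'def
  have hν' : ∀ n, ν' n ∈ Set.Ioo (0:ℝ) 1 := fun n => hν (n + 1)
  have hν'0 : Tendsto ν' atTop (𝓝 0) := (tendsto_add_atTop_iff_nat 1).2 hν0
  have hν'sum : ¬ Summable ν' := fun h => hνsum ((summable_nat_add_iff 1).1 h)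
  -- the inertial correction sequence
  set s : ℕ → ℝ := fun n => δ (n + 1) / ν (n + 1) * ‖x (n + 1) - x n‖ with hsdef
  have hs0 : ∀ n, 0 ≤ s n := fun n =>
    mul_nonneg (div_nonneg (hδ _) (le_of_lt (hν _).1)) (norm_nonneg _)
  have hδν : ∀ n, δ (n + 1) * ‖x (n + 1) - x n‖ = ν (n + 1) * s n := by
    intro n
    have hne : ν (n+1) ≠ 0 := ne_of_gt (hν (n+1)).1
    rw [hsdef]
    field_simp
  obtain ⟨S, hS⟩ := hD2.bddAbove_range
  have hS' : ∀ n, s n ≤ S := fun n => hS ⟨n, rfl⟩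
  have hS0 : 0 ≤ S := le_trans (hs0 0) (hS' 0)
  -- basic norm inequalities
  have hwp : ∀ n, ‖w (n+1) - p‖ ≤ ‖x (n+1) - p‖ + ν (n+1) * s n := by
    intro n
    have h1 : w (n+1) - p = (x (n+1) - p) + δ (n+1) • (x (n+1) - x n) := by
      rw [hw n]; abel
    rw [h1]
    calc ‖(x (n+1) - p) + δ (n+1) • (x (n+1) - x n)‖
        ≤ ‖x (n+1) - p‖ + ‖δ (n+1) • (x (n+1) - x n)‖ := norm_add_le _ _
      _ = ‖x (n+1) - p‖ + ν (n+1) * s n := by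
          rw [norm_smul, Real.norm_eq_abs, abs_of_nonneg (hδ _), hδν n]
  have hTwp : ∀ n, ‖T (w (n+1)) - p‖ ≤ ‖w (n+1) - p‖ := by
    intro n
    have := hT (w (n+1)) (hwC _) p hpC
    rwa [hp] at this
  have hψ1 : ∀ n, 0 < ψ n := fun n => lt_of_lt_of_le hab (hψ n).1
  have hψ2 : ∀ n, ψ n < 1 := fun n => lt_of_le_of_lt (hψ n).2 hb1
  have hyp : ∀ n, ‖y (n+1) - p‖ ≤ ‖w (n+1) - p‖ := by
    intro n
    have h1 : y (n+1) - p = ψ (n+1) • (w (n+1) - p) + (1 - ψ (n+1)) • (T (w (n+1)) - p) := by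
      rw [hy n]; module
    rw [h1]
    calc ‖ψ (n+1) • (w (n+1) - p) + (1 - ψ (n+1)) • (T (w (n+1)) - p)‖
        ≤ ‖ψ (n+1) • (w (n+1) - p)‖ + ‖(1 - ψ (n+1)) • (T (w (n+1)) - p)‖ := norm_add_le _ _
      _ = ψ (n+1) * ‖w (n+1) - p‖ + (1 - ψ (n+1)) * ‖T (w (n+1)) - p‖ := by
          rw [norm_smul, norm_smul, Real.norm_eq_abs, Real.norm_eq_abs,
            abs_of_pos (hψ1 _), abs_of_pos (by linarith [hψ2 (n+1)] : (0:ℝ) < 1 - ψ (n+1))]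
      _ ≤ ‖w (n+1) - p‖ := by nlinarith [hTwp n, hψ1 (n+1), hψ2 (n+1), norm_nonneg (w (n+1) - p)]
  have hxp : ∀ n, x (n+2) - p = ν (n+1) • (u - p) + (1 - ν (n+1)) • (y (n+1) - p) := by
    intro n; rw [hx n]; module
  -- boundedness
  set M : ℝ := max ‖x 1 - p‖ (‖u - p‖ + S) with hMdef
  have hM2 : ‖u - p‖ + S ≤ M := le_max_right _ _
  have hM0 : 0 ≤ M := le_trans (by positivity) hM2
  have hxb : ∀ n, ‖x (n+1) - p‖ ≤ M := by
    intro n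
    induction n with
    | zero => exact le_max_left _ _
    | succ n ih =>
      have h1 : ‖x (n+2) - p‖ ≤ ν (n+1) * ‖u - p‖ + (1 - ν (n+1)) * ‖y (n+1) - p‖ := by
        rw [hxp n]
        calc ‖ν (n+1) • (u - p) + (1 - ν (n+1)) • (y (n+1) - p)‖
            ≤ ‖ν (n+1) • (u - p)‖ + ‖(1 - ν (n+1)) • (y (n+1) - p)‖ := norm_add_le _ _
          _ = ν (n+1) * ‖u - p‖ + (1 - ν (n+1)) * ‖y (n+1) - p‖ := by
              rw [norm_smul, norm_smul, Real.norm_eq_abs, Real.norm_eq_abs,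
                abs_of_pos (hν _).1, abs_of_pos (by linarith [(hν (n+1)).2] : (0:ℝ) < 1 - ν (n+1))]
      have e1 : ‖y (n+1) - p‖ ≤ M + ν (n+1) * s n := by linarith [hyp n, hwp n, ih]
      have h4 := (hν (n+1)).1
      have h5 := (hν (n+1)).2
      have h6 := hs0 n
      have h7 := hS' n
      have m1 : ν (n+1) * s n ≤ ν (n+1) * S := mul_le_mul_of_nonneg_left h7 h4.le
      have m2 : 0 ≤ ν (n+1) * s n := mul_nonneg h4.le h6
      have m3 : ν (n+1) * (‖u - p‖ + S) ≤ ν (n+1) * M := mul_le_mul_of_nonneg_left hM2 h4.le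
      have m4 : (1 - ν (n+1)) * ‖y (n+1) - p‖ ≤ (1 - ν (n+1)) * (M + ν (n+1) * s n) :=
        mul_le_mul_of_nonneg_left e1 (by linarith)
      nlinarith [norm_nonneg (y (n+1) - p), norm_nonneg (u - p)]
  have hwpb : ∀ n, ‖w (n+1) - p‖ ≤ M + S := by
    intro n
    have h1 := hwp n
    have h2 := hxb n
    have h3 := hs0 n
    have h4 := hS' n
    have h5 := (hν (n+1)).1
    have h6 := (hν (n+1)).2
    nlinarith
  have hwB : ∀ n, ‖w (n+1)‖ ≤ M + S + ‖p‖ := by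
    intro n
    calc ‖w (n+1)‖ = ‖(w (n+1) - p) + p‖ := by congr 1; abel
      _ ≤ ‖w (n+1) - p‖ + ‖p‖ := norm_add_le _ _
      _ ≤ M + S + ‖p‖ := by linarith [hwpb n]
  have hypb : ∀ n, ‖y (n+1) - p‖ ≤ M + S := fun n => le_trans (hyp n) (hwpb n)
  -- the three key quantities (kept unbundled to ease arithmetic)
  set K : ℝ := 2 * M + S with hKdef
  have hK0 : 0 ≤ K := by rw [hKdef]; linarith
  have hA0 : ∀ n : ℕ, (0:ℝ) ≤ ‖x (n+1) - p‖^2 := fun n => sq_nonneg _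
  have hψψ : ∀ n, 0 ≤ ψ (n+1) * (1 - ψ (n+1)) := fun n =>
    mul_nonneg (le_of_lt (hψ1 _)) (by linarith [hψ2 (n+1)])
  have hc0 : ∀ n : ℕ, (0:ℝ) ≤
      (1 - ν (n+1)) * (ψ (n+1) * (1 - ψ (n+1))) * ‖w (n+1) - T (w (n+1))‖^2 := fun n =>
    mul_nonneg (mul_nonneg (by linarith [(hν (n+1)).2]) (hψψ n)) (sq_nonneg _)
  have hAb : ∀ n : ℕ, ‖x (n+1) - p‖^2 ≤ M^2 := fun n =>
    pow_le_pow_left₀ (norm_nonneg _) (hxb n) 2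
  have hBb : ∀ n : ℕ, |2 * ⟪u - p, x (n+2) - p⟫ + K * s n| ≤ 2 * ‖u - p‖ * M + K * S := by
    intro n
    have h1 : |(⟪u - p, x (n+2) - p⟫ : ℝ)| ≤ ‖u - p‖ * M :=
      le_trans (abs_real_inner_le_norm _ _)
        (mul_le_mul_of_nonneg_left (hxb (n+1)) (norm_nonneg _))
    have h2 : |K * s n| ≤ K * S := by
      rw [abs_of_nonneg (mul_nonneg hK0 (hs0 n))]
      exact mul_le_mul_of_nonneg_left (hS' n) hK0
    calc |2 * ⟪u - p, x (n+2) - p⟫ + K * s n|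
        ≤ |2 * ⟪u - p, x (n+2) - p⟫| + |K * s n| := abs_add_le _ _
      _ ≤ 2 * ‖u - p‖ * M + K * S := by
          rw [abs_mul, abs_two]
          have := abs_nonneg ((⟪u - p, x (n+2) - p⟫ : ℝ))
          nlinarith
  -- the central recursion
  have hrec : ∀ n : ℕ, ‖x (n+2) - p‖^2 ≤
      (1 - ν (n+1)) * ‖x (n+1) - p‖^2
      + ν (n+1) * (2 * ⟪u - p, x (n+2) - p⟫ + K * s n)
      - (1 - ν (n+1)) * (ψ (n+1) * (1 - ψ (n+1))) * ‖w (n+1) - T (w (n+1))‖^2 := by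
    intro n
    have h5 := (hν (n+1)).1
    have h6 := (hν (n+1)).2
    have h3 := hs0 n
    have h4 := hS' n
    have hiii : ‖w (n+1) - p‖^2 ≤ ‖x (n+1) - p‖^2 + ν (n+1) * s n * K := by
      have h1 := hwp n
      have h2 := hxb n
      have m2 : ‖w (n+1) - p‖^2 ≤ (‖x (n+1) - p‖ + ν (n+1) * s n)^2 :=
        pow_le_pow_left₀ (norm_nonneg _) h1 2
      have m0 : 0 ≤ ν (n+1) * s n := mul_nonneg h5.le h3
      have m1 : ν (n+1) * s n ≤ S := le_trans (mul_le_of_le_one_left h3 h6.le) h4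
      have h8 := norm_nonneg (x (n+1) - p)
      rw [hKdef]
      nlinarith
    have hii : ‖y (n+1) - p‖^2 ≤ ‖w (n+1) - p‖^2
        - ψ (n+1) * (1 - ψ (n+1)) * ‖w (n+1) - T (w (n+1))‖^2 := by
      have h1 : y (n+1) - p = ψ (n+1) • (w (n+1) - p) + (1 - ψ (n+1)) • (T (w (n+1)) - p) := by
        rw [hy n]; module
      have h2 := combo_norm_sq (ψ (n+1)) (w (n+1) - p) (T (w (n+1)) - p)
      have h3' : (w (n+1) - p) - (T (w (n+1)) - p) = w (n+1) - T (w (n+1)) := by abel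
      rw [h3'] at h2
      rw [h1, h2]
      have hsq : ‖T (w (n+1)) - p‖^2 ≤ ‖w (n+1) - p‖^2 :=
        pow_le_pow_left₀ (norm_nonneg _) (hTwp n) 2
      have := mul_le_mul_of_nonneg_left hsq (by linarith [hψ2 (n+1)] : (0:ℝ) ≤ 1 - ψ (n+1))
      linarith
    have hi : ‖x (n+2) - p‖^2 ≤ (1 - ν (n+1)) * ‖y (n+1) - p‖^2
        + 2 * (ν (n+1) * ⟪u - p, x (n+2) - p⟫) := by
      have h1 := norm_add_sq_le ((1 - ν (n+1)) • (y (n+1) - p)) (ν (n+1) • (u - p))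
      have h2 : (1 - ν (n+1)) • (y (n+1) - p) + ν (n+1) • (u - p) = x (n+2) - p := by
        rw [hxp n]; abel
      rw [h2] at h1
      have h3' : ⟪ν (n+1) • (u - p), x (n+2) - p⟫ = ν (n+1) * ⟪u - p, x (n+2) - p⟫ :=
        real_inner_smul_left _ _ _
      rw [h3'] at h1
      have h4' : ‖(1 - ν (n+1)) • (y (n+1) - p)‖^2 = (1 - ν (n+1))^2 * ‖y (n+1) - p‖^2 := by
        rw [norm_smul, mul_pow, Real.norm_eq_abs, sq_abs]
      rw [h4'] at h1
      nlinarith [sq_nonneg ‖y (n+1) - p‖]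
    -- combine
    have step1 : (1 - ν (n+1)) * ‖y (n+1) - p‖^2 ≤
        (1 - ν (n+1)) * (‖w (n+1) - p‖^2
          - ψ (n+1) * (1 - ψ (n+1)) * ‖w (n+1) - T (w (n+1))‖^2) :=
      mul_le_mul_of_nonneg_left hii (by linarith)
    have step2 : (1 - ν (n+1)) * ‖w (n+1) - p‖^2 ≤
        (1 - ν (n+1)) * (‖x (n+1) - p‖^2 + ν (n+1) * s n * K) :=
      mul_le_mul_of_nonneg_left hiii (by linarith)
    have m3 : 0 ≤ ν (n+1) * ν (n+1) * (s n * K) := by positivity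
    linarith [step1, step2, m3, hi]
  -- verification of the subsequence hypothesis
  have Hhyp : ∀ φ : ℕ → ℕ, Tendsto φ atTop atTop →
      Tendsto (fun k => (1 - ν (φ k + 1)) * (ψ (φ k + 1) * (1 - ψ (φ k + 1)))
        * ‖w (φ k + 1) - T (w (φ k + 1))‖^2) atTop (𝓝 0) →
      ∃ σ : ℕ → ℕ, StrictMono σ ∧ ∃ L ≤ (0:ℝ),
        Tendsto (fun k => 2 * ⟪u - p, x (φ (σ k) + 2) - p⟫ + K * s (φ (σ k))) atTop (𝓝 L) := by
    intro φ hφ hcφ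
    have hνφ : Tendsto (fun k => ν (φ k + 1)) atTop (𝓝 0) := hν'0.comp hφ
    have hpos : (0:ℝ) < a * (1 - b) := by nlinarith
    have hsq : Tendsto (fun k => ‖w (φ k + 1) - T (w (φ k + 1))‖^2) atTop (𝓝 0) := by
      apply squeeze_zero' (Eventually.of_forall fun k => sq_nonneg _)
        (g := fun k => 2 * ((1 - ν (φ k + 1)) * (ψ (φ k + 1) * (1 - ψ (φ k + 1)))
          * ‖w (φ k + 1) - T (w (φ k + 1))‖^2) / (a * (1 - b)))
      · filter_upwards [hνφ.eventually (eventually_le_nhds (by norm_num : (0:ℝ) < 1/2))]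
          with k hk
        have hD0 : (0:ℝ) ≤ ‖w (φ k + 1) - T (w (φ k + 1))‖^2 := sq_nonneg _
        have hψl : a * (1 - b) ≤ ψ (φ k + 1) * (1 - ψ (φ k + 1)) :=
          mul_le_mul (hψ _).1 (by linarith [(hψ (φ k + 1)).2]) (by linarith)
            (le_of_lt (hψ1 _))
        have hcoef : (1/2) * (a * (1 - b)) ≤
            (1 - ν (φ k + 1)) * (ψ (φ k + 1) * (1 - ψ (φ k + 1))) :=
          mul_le_mul (by linarith) hψl (by positivity) (by linarith [(hν (φ k + 1)).2])
        have h2 := mul_le_mul_of_nonneg_right hcoef hD0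
        rw [le_div_iff₀ hpos]
        nlinarith
      · simpa using (hcφ.const_mul 2).div_const (a * (1 - b))
    have hwT0 : Tendsto (fun k => ‖w (φ k + 1) - T (w (φ k + 1))‖) atTop (𝓝 0) := by
      have heq : (fun k => ‖w (φ k + 1) - T (w (φ k + 1))‖)
          = fun k => Real.sqrt (‖w (φ k + 1) - T (w (φ k + 1))‖^2) :=
        funext fun k => (Real.sqrt_sq (norm_nonneg _)).symm
      rw [heq]
      have hcomp := (Real.continuous_sqrt.tendsto 0).comp hsq
      rw [Real.sqrt_zero] at hcomp
      exact hcomp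
    obtain ⟨z, σ, hσ, hweak⟩ := exists_weak_subseq (fun k => w (φ k + 1)) (M + S + ‖p‖)
      (fun k => hwB (φ k))
    have hφσ : Tendsto (φ ∘ σ) atTop atTop := hφ.comp hσ.tendsto_atTop
    have hwTσ : Tendsto (fun k => ‖w (φ (σ k) + 1) - T (w (φ (σ k) + 1))‖) atTop (𝓝 0) :=
      hwT0.comp hσ.tendsto_atTop
    obtain ⟨hzC, hTz⟩ := weak_limit_fixed hC hCc hCv T hT (fun k => w (φ (σ k) + 1))
      (fun k => hwC _) (M + S + ‖p‖) (fun k => hwB _) z hweak hwTσ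
    have hL0 : (⟪u - p, z - p⟫ : ℝ) ≤ 0 := vi_of_proj hCv T hTC hT u p hpC hp hproj hzC hTz
    refine ⟨σ, hσ, 2 * ⟪u - p, z - p⟫, by linarith, ?_⟩
    have hsφσ : Tendsto (fun k => s (φ (σ k))) atTop (𝓝 0) := hD2.comp hφσ
    have hνφσ : Tendsto (fun k => ν (φ (σ k) + 1)) atTop (𝓝 0) := hν'0.comp hφσ
    have hT1 : Tendsto (fun k => (⟪u - p, w (φ (σ k) + 1) - p⟫ : ℝ)) atTop
        (𝓝 ⟪u - p, z - p⟫) := by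
      have h1 := (hweak (u - p)).sub_const ((⟪u - p, p⟫ : ℝ))
      have h2 : ∀ v' : H, (⟪u - p, v'⟫ : ℝ) - ⟪u - p, p⟫ = ⟪u - p, v' - p⟫ := fun v' =>
        (inner_sub_right _ _ _).symm
      simpa [h2] using h1
    have hxw : ∀ n : ℕ, x (n+2) - w (n+1)
        = ν (n+1) • (u - y (n+1)) + (1 - ψ (n+1)) • (T (w (n+1)) - w (n+1)) := by
      intro n; rw [hx n, hy n]; module
    have hxwn : Tendsto (fun k => ‖x (φ (σ k) + 2) - w (φ (σ k) + 1)‖) atTop (𝓝 0) := by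
      apply squeeze_zero' (Eventually.of_forall fun k => norm_nonneg _)
        (g := fun k => ν (φ (σ k) + 1) * (‖u - p‖ + (M + S))
          + ‖w (φ (σ k) + 1) - T (w (φ (σ k) + 1))‖)
      · apply Eventually.of_forall; intro k
        have e0 := hxw (φ (σ k))
        rw [e0]
        have e1 : ‖ν (φ (σ k) + 1) • (u - y (φ (σ k) + 1))‖
            = ν (φ (σ k) + 1) * ‖u - y (φ (σ k) + 1)‖ := by
          rw [norm_smul, Real.norm_eq_abs, abs_of_pos (hν _).1]
        have e2 : ‖u - y (φ (σ k) + 1)‖ ≤ ‖u - p‖ + ‖y (φ (σ k) + 1) - p‖ := by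
          have h : u - y (φ (σ k) + 1) = (u - p) - (y (φ (σ k) + 1) - p) := by abel
          rw [h]; exact norm_sub_le _ _
        have e3 : ‖(1 - ψ (φ (σ k) + 1)) • (T (w (φ (σ k) + 1)) - w (φ (σ k) + 1))‖
            = (1 - ψ (φ (σ k) + 1)) * ‖T (w (φ (σ k) + 1)) - w (φ (σ k) + 1)‖ := by
          rw [norm_smul, Real.norm_eq_abs, abs_of_pos (by linarith [hψ2 (φ (σ k) + 1)])]
        have e4 : ‖T (w (φ (σ k) + 1)) - w (φ (σ k) + 1)‖
            = ‖w (φ (σ k) + 1) - T (w (φ (σ k) + 1))‖ := norm_sub_rev _ _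
        have e5 := hypb (φ (σ k))
        have e6 := (hν (φ (σ k) + 1)).1
        have e7 := hψ1 (φ (σ k) + 1)
        have e8 := hψ2 (φ (σ k) + 1)
        have e9 := norm_nonneg (T (w (φ (σ k) + 1)) - w (φ (σ k) + 1))
        have e10 := norm_nonneg (u - y (φ (σ k) + 1))
        calc ‖ν (φ (σ k) + 1) • (u - y (φ (σ k) + 1))
              + (1 - ψ (φ (σ k) + 1)) • (T (w (φ (σ k) + 1)) - w (φ (σ k) + 1))‖
            ≤ ‖ν (φ (σ k) + 1) • (u - y (φ (σ k) + 1))‖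
              + ‖(1 - ψ (φ (σ k) + 1)) • (T (w (φ (σ k) + 1)) - w (φ (σ k) + 1))‖ :=
              norm_add_le _ _
          _ ≤ ν (φ (σ k) + 1) * (‖u - p‖ + (M + S))
              + ‖w (φ (σ k) + 1) - T (w (φ (σ k) + 1))‖ := by
              rw [e1, e3, e4]
              have m1 : ν (φ (σ k) + 1) * ‖u - y (φ (σ k) + 1)‖
                  ≤ ν (φ (σ k) + 1) * (‖u - p‖ + (M + S)) :=
                mul_le_mul_of_nonneg_left (by linarith) e6.le
              have m2 : (1 - ψ (φ (σ k) + 1)) * ‖w (φ (σ k) + 1) - T (w (φ (σ k) + 1))‖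
                  ≤ 1 * ‖w (φ (σ k) + 1) - T (w (φ (σ k) + 1))‖ :=
                mul_le_mul_of_nonneg_right (by linarith) (norm_nonneg _)
              linarith [m2]
      · simpa using (hνφσ.mul_const (‖u - p‖ + (M + S))).add hwTσ
    have hT2 : Tendsto (fun k => (⟪u - p, x (φ (σ k) + 2) - w (φ (σ k) + 1)⟫ : ℝ))
        atTop (𝓝 0) := by
      refine squeeze_zero_norm (fun k => ?_) (by simpa using hxwn.const_mul ‖u - p‖)
      rw [Real.norm_eq_abs]
      exact abs_real_inner_le_norm _ _
    have h1 : ∀ k, (⟪u - p, x (φ (σ k) + 2) - p⟫ : ℝ)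
        = ⟪u - p, w (φ (σ k) + 1) - p⟫ + ⟪u - p, x (φ (σ k) + 2) - w (φ (σ k) + 1)⟫ := by
      intro k
      rw [← inner_add_right]
      congr 1
      abel
    have h2 := ((hT1.add hT2).const_mul (2:ℝ)).add (hsφσ.const_mul K)
    have h3 : (2:ℝ) * (⟪u - p, z - p⟫ + 0) + K * 0 = 2 * ⟪u - p, z - p⟫ := by ring
    rw [← h3]
    simp only [h1]
    exact h2
  -- apply the Maingé-type lemma
  have hA := mainge_lemma (fun n => ‖x (n+1) - p‖^2)
      (fun n => 2 * ⟪u - p, x (n+2) - p⟫ + K * s n)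
      (fun n => (1 - ν (n+1)) * (ψ (n+1) * (1 - ψ (n+1))) * ‖w (n+1) - T (w (n+1))‖^2)
      ν' hA0 hc0 hν' hν'0 hν'sum hrec (M^2) (2 * ‖u - p‖ * M + K * S) hAb hBb Hhyp
  have hnorm : Tendsto (fun n => ‖x (n+1) - p‖) atTop (𝓝 0) := by
    have heq : (fun n => ‖x (n+1) - p‖) = fun n => Real.sqrt (‖x (n+1) - p‖^2) :=
      funext fun n => (Real.sqrt_sq (norm_nonneg _)).symm
    rw [heq]
    have hcomp := (Real.continuous_sqrt.tendsto 0).comp hA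
    rw [Real.sqrt_zero] at hcomp
    exact hcomp
  have hx1 : Tendsto (fun n => x (n+1)) atTop (𝓝 p) := by
    rw [tendsto_iff_norm_sub_tendsto_zero]
    exact hnorm
  exact (tendsto_add_atTop_iff_nat 1).1 hx1
end

section
/- Let C be a nonempty closed convex subset of a real Hilbert space H and T: C → H nonexpansive. If a sequence {xₙ} in C converges weakly to x ∈ H and ‖Txₙ − xₙ‖ → 0, then x ∈ C and Tx = x (demiclosedness principle). -/
open Filter Topology

/-- Demiclosedness principle: if `T` is nonexpansive on the nonempty closed convex set `C`,
`{xₙ} ⊆ C` converges weakly to `x`, and `‖Txₙ - xₙ‖ → 0`, then `x ∈ C` and `Tx = x`. -/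
theorem stmt_3 {H : Type*} [NormedAddCommGroup H] [InnerProductSpace ℝ H] [CompleteSpace H]
    (C : Set H) (hC : C.Nonempty) (hCc : IsClosed C) (hCv : Convex ℝ C)
    (T : H → H) (hT : ∀ x ∈ C, ∀ y ∈ C, ‖T x - T y‖ ≤ ‖x - y‖)
    (x : ℕ → H) (hxC : ∀ n, x n ∈ C) (p : H)
    (hweak : ∀ v : H, Tendsto (fun n => (inner ℝ (x n) v : ℝ)) atTop (𝓝 (inner ℝ p v)))
    (hasymp : Tendsto (fun n => ‖T (x n) - x n‖) atTop (𝓝 0)) :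
    p ∈ C ∧ T p = p := by
  -- the weak limit of inner products of differences
  have hweak' : ∀ v : H, Tendsto (fun n => (inner ℝ (x n - p) v : ℝ)) atTop (𝓝 0) := by
    intro v
    have := (hweak v).sub_const (inner ℝ p v)
    simpa [inner_sub_left] using this
  -- Step 1 : p ∈ C
  have hpC : p ∈ C := by
    obtain ⟨v, hvC, hv⟩ := exists_norm_eq_iInf_of_complete_convex hC
      (hCc.isComplete) hCv p
    have hchar := (norm_eq_iInf_iff_real_inner_le_zero hCv hvC).1 hv
    have hle : ∀ n, (inner ℝ (x n - p) (p - v) : ℝ) ≤ - ‖p - v‖ ^ 2 := by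
      intro n
      have := hchar (x n) (hxC n)
      have hxsplit : x n - v = (x n - p) + (p - v) := by abel
      rw [hxsplit, inner_add_right] at this
      have : (inner ℝ (p - v) (x n - p) : ℝ) + ‖p - v‖^2 ≤ 0 := by
        rwa [real_inner_self_eq_norm_sq] at this
      have hs : (inner ℝ (p - v) (x n - p) : ℝ) = inner ℝ (x n - p) (p - v) :=
        real_inner_comm _ _
      linarith [hs ▸ this]
    have hlim := hweak' (p - v)
    have : (0 : ℝ) ≤ - ‖p - v‖ ^ 2 :=
      le_of_tendsto hlim (Eventually.of_forall hle)
    have : ‖p - v‖ = 0 := by nlinarith [sq_nonneg ‖p - v‖, norm_nonneg (p - v)]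
    have : p = v := by rwa [← sub_eq_zero, ← norm_eq_zero]
    rw [this]; exact hvC
  -- Step 2 : boundedness of (x n) via Banach-Steinhaus
  obtain ⟨M, hM⟩ : ∃ M, ∀ n, ‖x n‖ ≤ M := by
    have hbdd : ∀ v : H, ∃ B, ∀ n, ‖(InnerProductSpace.toDual ℝ H (x n)) v‖ ≤ B := by
      intro v
      have hb := (Metric.isBounded_range_of_tendsto _ (hweak v)).subset_closedBall 0
      obtain ⟨r, hr⟩ := hb
      exact ⟨r, fun n => by
        have := hr ⟨n, rfl⟩
        simpa [Metric.mem_closedBall, Real.dist_eq, InnerProductSpace.toDual_apply_apply,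
          Real.norm_eq_abs] using this⟩
    obtain ⟨M, hM⟩ := banach_steinhaus hbdd
    exact ⟨M, fun n => by
      have := hM n
      rwa [(InnerProductSpace.toDual ℝ H).norm_map] at this⟩
  -- Step 3 : T p = p
  set d : ℝ := ‖p - T p‖ with hd
  have key : ∀ n, d ^ 2 ≤ -2 * (inner ℝ (x n - p) (p - T p) : ℝ)
      + 2 * ‖T (x n) - x n‖ * (M + ‖p‖) + ‖T (x n) - x n‖ ^ 2 := by
    intro n
    have h1 : ‖x n - T p‖ ≤ ‖T (x n) - x n‖ + ‖x n - p‖ := by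
      calc ‖x n - T p‖ = ‖(x n - T (x n)) + (T (x n) - T p)‖ := by rw [sub_add_sub_cancel]
        _ ≤ ‖x n - T (x n)‖ + ‖T (x n) - T p‖ := norm_add_le _ _
        _ ≤ ‖T (x n) - x n‖ + ‖x n - p‖ := by
            rw [norm_sub_rev (x n)]
            exact add_le_add le_rfl (hT (x n) (hxC n) p hpC)
    have h2 : ‖x n - T p‖ ^ 2 = ‖x n - p‖ ^ 2 + 2 * (inner ℝ (x n - p) (p - T p) : ℝ) + d ^ 2 := by
      have : x n - T p = (x n - p) + (p - T p) := by abel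
      rw [this, ← real_inner_self_eq_norm_sq, inner_add_add_self,
        real_inner_self_eq_norm_sq, real_inner_self_eq_norm_sq,
        real_inner_comm (p - T p) (x n - p)]
      ring
    have h3 : ‖x n - T p‖ ^ 2 ≤ (‖T (x n) - x n‖ + ‖x n - p‖) ^ 2 := by
      apply sq_le_sq' _ h1
      have := norm_nonneg (x n - T p)
      nlinarith [norm_nonneg (T (x n) - x n), norm_nonneg (x n - p)]
    have hxb : ‖x n - p‖ ≤ M + ‖p‖ := by
      calc ‖x n - p‖ ≤ ‖x n‖ + ‖p‖ := norm_sub_le _ _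
        _ ≤ M + ‖p‖ := by linarith [hM n]
    nlinarith [norm_nonneg (T (x n) - x n), norm_nonneg (x n - p), h2 ▸ h3]
  have hrhs : Tendsto (fun n => -2 * (inner ℝ (x n - p) (p - T p) : ℝ)
      + 2 * ‖T (x n) - x n‖ * (M + ‖p‖) + ‖T (x n) - x n‖ ^ 2) atTop (𝓝 0) := by
    have t1 := (hweak' (p - T p)).const_mul (-2)
    have t2 := (hasymp.const_mul 2).mul_const (M + ‖p‖)
    have t3 := hasymp.pow 2
    have := (t1.add t2).add t3
    simpa using this
  have hd2 : d ^ 2 ≤ 0 := ge_of_tendsto hrhs (Eventually.of_forall key)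
  have : d = 0 := by nlinarith [sq_nonneg d, norm_nonneg (p - T p)]
  have : p - T p = 0 := by rwa [← norm_eq_zero]
  exact ⟨hpC, (sub_eq_zero.1 this).symm⟩
end

section
/- Let H₁, H₂ be real Hilbert spaces, C ⊆ H₁ and Q ⊆ H₂ nonempty closed convex, and A: H₁ → H₂ a bounded linear operator. A point x* solves the split feasibility problem (x* ∈ C and Ax* ∈ Q) if and only if x* is a fixed point of the mapping x ↦ P_C(x − λA*(I − P_Q)Ax) for λ > 0, whenever the split feasibility problem has a solution. -/
open RealInnerProductSpace

/-- Variational inequality for an abstract metric projection onto a convex set. -/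
lemma proj_var_ineq {E : Type*} [NormedAddCommGroup E] [InnerProductSpace ℝ E]
    {K : Set E} (hK : Convex ℝ K) (P : E → E)
    (hP : ∀ x, P x ∈ K ∧ ∀ y ∈ K, ‖x - P x‖ ≤ ‖x - y‖) (x : E) :
    ∀ w ∈ K, ⟪x - P x, w - P x⟫ ≤ 0 := by
  have h1 : P x ∈ K := (hP x).1
  haveI : Nonempty K := ⟨⟨P x, h1⟩⟩
  have heq : ‖x - P x‖ = ⨅ w : K, ‖x - (w : E)‖ := by
    refine le_antisymm (le_ciInf fun w => (hP x).2 w w.2) ?_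
    exact ciInf_le ⟨0, by rintro b ⟨w, rfl⟩; positivity⟩ (⟨P x, h1⟩ : K)
  exact (norm_eq_iInf_iff_real_inner_le_zero hK h1).1 heq

/-- Points of the set are fixed by the metric projection. -/
lemma proj_fix {E : Type*} [NormedAddCommGroup E] [InnerProductSpace ℝ E]
    {K : Set E} (P : E → E)
    (hP : ∀ x, P x ∈ K ∧ ∀ y ∈ K, ‖x - P x‖ ≤ ‖x - y‖) {x : E} (hx : x ∈ K) :
    P x = x := by
  have := (hP x).2 x hx
  simp only [sub_self, norm_zero] at this
  have : ‖x - P x‖ = 0 := le_antisymm this (norm_nonneg _)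
  exact (norm_sub_eq_zero_iff.1 this).symm

/-- Fixed point characterization of the split feasibility problem: assuming SFP is solvable,
`x* ∈ C ∧ Ax* ∈ Q` iff `x*` is a fixed point of `x ↦ P_C (x - λ A* (I - P_Q) A x)` (`λ > 0`). -/
theorem stmt_11 {H₁ H₂ : Type*}
    [NormedAddCommGroup H₁] [InnerProductSpace ℝ H₁] [CompleteSpace H₁]
    [NormedAddCommGroup H₂] [InnerProductSpace ℝ H₂] [CompleteSpace H₂]
    (C : Set H₁) (hC : C.Nonempty) (hCc : IsClosed C) (hCv : Convex ℝ C)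
    (Q : Set H₂) (hQ : Q.Nonempty) (hQc : IsClosed Q) (hQv : Convex ℝ Q)
    (A : H₁ →L[ℝ] H₂)
    (PC : H₁ → H₁) (hPC : ∀ x, PC x ∈ C ∧ ∀ y ∈ C, ‖x - PC x‖ ≤ ‖x - y‖)
    (PQ : H₂ → H₂) (hPQ : ∀ x, PQ x ∈ Q ∧ ∀ y ∈ Q, ‖x - PQ x‖ ≤ ‖x - y‖)
    (lam : ℝ) (hlam : 0 < lam)
    (hsol : ∃ x, x ∈ C ∧ A x ∈ Q) (xs : H₁) :
    (xs ∈ C ∧ A xs ∈ Q) ↔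
      PC (xs - lam • (ContinuousLinearMap.adjoint A) (A xs - PQ (A xs))) = xs := by
  constructor
  · rintro ⟨hxC, hxQ⟩
    have hfix : PQ (A xs) = A xs := proj_fix PQ hPQ hxQ
    rw [hfix]
    simp only [sub_self, map_zero, smul_zero, sub_zero]
    exact proj_fix PC hPC hxC
  · intro hfix
    set v : H₂ := A xs - PQ (A xs) with hv
    set z : H₁ := xs - lam • (ContinuousLinearMap.adjoint A) v with hz
    have hxC : xs ∈ C := hfix ▸ (hPC z).1
    obtain ⟨xh, hxhC, hxhQ⟩ := hsol
    -- variational inequality for PC at z, evaluated at xh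
    have h1 : ⟪z - xs, xh - xs⟫ ≤ 0 := by
      have := proj_var_ineq hCv PC hPC z xh hxhC
      rwa [hfix] at this
    have hzx : z - xs = -(lam • (ContinuousLinearMap.adjoint A) v) := by
      rw [hz]; abel
    have h2 : 0 ≤ ⟪v, A xh - A xs⟫ := by
      rw [hzx, inner_neg_left, real_inner_smul_left,
        ContinuousLinearMap.adjoint_inner_left] at h1
      have : 0 ≤ lam * ⟪v, A (xh - xs)⟫ := by linarith
      have h3 : 0 ≤ ⟪v, A (xh - xs)⟫ := nonneg_of_mul_nonneg_right this hlam
      rwa [map_sub] at h3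
    have h4 : ⟪v, A xh - PQ (A xs)⟫ ≤ 0 := proj_var_ineq hQv PQ hPQ (A xs) (A xh) hxhQ
    have h5 : ⟪v, v⟫ ≤ 0 := by
      have : ⟪v, v⟫ = ⟪v, A xh - PQ (A xs)⟫ - ⟪v, A xh - A xs⟫ := by
        rw [← inner_sub_right]; congr 1; rw [hv]; abel
      linarith
    have hv0 : v = 0 := by
      have := real_inner_self_nonneg (x := v)
      exact inner_self_eq_zero.1 (le_antisymm h5 this)
    have : A xs = PQ (A xs) := by
      have := sub_eq_zero.1 hv0; exact this
    exact ⟨hxC, this ▸ (hPQ (A xs)).1⟩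
end

section
/- Let H₁, H₂ be real Hilbert spaces, A: H₁ → H₂ bounded linear, and Q ⊆ H₂ nonempty closed convex. The mapping x ↦ x − λA*(I − P_Q)Ax is nonexpansive on H₁ whenever 0 < λ ≤ 1/‖A‖² (indeed it is averaged for 0 < λ < 2/‖A‖²). -/
open scoped RealInnerProductSpace

/-- The gradient step `x ↦ x - λ A*(I - P_Q)Ax` of the split feasibility problem is
nonexpansive whenever `0 < λ ≤ 1/‖A‖²` (i.e. `λ‖A‖² ≤ 1`). -/
theorem stmt_12 {H₁ H₂ : Type*}
    [NormedAddCommGroup H₁] [InnerProductSpace ℝ H₁] [CompleteSpace H₁]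
    [NormedAddCommGroup H₂] [InnerProductSpace ℝ H₂] [CompleteSpace H₂]
    (Q : Set H₂) (hQ : Q.Nonempty) (hQc : IsClosed Q) (hQv : Convex ℝ Q)
    (A : H₁ →L[ℝ] H₂)
    (PQ : H₂ → H₂) (hPQ : ∀ x, PQ x ∈ Q ∧ ∀ y ∈ Q, ‖x - PQ x‖ ≤ ‖x - y‖)
    (lam : ℝ) (hlam : 0 < lam) (hlam' : lam * ‖A‖ ^ 2 ≤ 1) :
    ∀ x y : H₁,
      ‖(x - lam • (ContinuousLinearMap.adjoint A) (A x - PQ (A x)))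
        - (y - lam • (ContinuousLinearMap.adjoint A) (A y - PQ (A y)))‖ ≤ ‖x - y‖ := by
  -- variational inequality for the projection
  have VI : ∀ u : H₂, ∀ y ∈ Q, ⟪u - PQ u, y - PQ u⟫ ≤ 0 := by
    intro u
    have h1 : ‖u - PQ u‖ = ⨅ w : Q, ‖u - w‖ := by
      haveI : Nonempty Q := hQ.to_subtype
      refine le_antisymm (le_ciInf fun w => (hPQ u).2 w w.2) ?_
      have hB : BddBelow (Set.range fun w : Q => ‖u - (w : H₂)‖) := by
        refine ⟨0, ?_⟩
        rintro r ⟨w, rfl⟩; exact norm_nonneg _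
      exact ciInf_le hB ⟨PQ u, (hPQ u).1⟩
    exact (norm_eq_iInf_iff_real_inner_le_zero hQv (hPQ u).1).1 h1
  -- firm nonexpansiveness of I - PQ
  have firm : ∀ u v : H₂,
      ‖(u - PQ u) - (v - PQ v)‖ ^ 2 ≤ ⟪(u - PQ u) - (v - PQ v), u - v⟫ := by
    intro u v
    have h1 := VI u (PQ v) (hPQ v).1
    have h2 := VI v (PQ u) (hPQ u).1
    have e : (u - v) = ((u - PQ u) - (v - PQ v)) + (PQ u - PQ v) := by abel
    rw [e, inner_add_right]
    have h3 : ⟪(u - PQ u) - (v - PQ v), PQ u - PQ v⟫ ≥ 0 := by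
      rw [inner_sub_left]
      have hb : ⟪v - PQ v, PQ u - PQ v⟫ ≤ 0 := h2
      have ha : ⟪u - PQ u, PQ u - PQ v⟫ ≥ 0 := by
        have : (PQ u - PQ v : H₂) = -(PQ v - PQ u) := by abel
        rw [this, inner_neg_right]; linarith
      linarith
    rw [real_inner_self_eq_norm_sq ((u - PQ u) - (v - PQ v))] at *
    linarith [real_inner_self_eq_norm_sq ((u - PQ u) - (v - PQ v))]
  intro x y
  set a := A x - PQ (A x) with ha
  set b := A y - PQ (A y) with hb
  set F : H₂ → H₁ := fun z => (ContinuousLinearMap.adjoint A) z with hF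
  have hmono : ‖a - b‖ ^ 2 ≤ ⟪F a - F b, x - y⟫ := by
    have : ⟪F a - F b, x - y⟫ = ⟪a - b, A x - A y⟫ := by
      rw [← map_sub, ContinuousLinearMap.adjoint_inner_left, map_sub]
    rw [this]
    exact firm (A x) (A y)
  have hnormF : ‖F a - F b‖ ≤ ‖A‖ * ‖a - b‖ := by
    rw [← map_sub]
    calc ‖(ContinuousLinearMap.adjoint A) (a - b)‖
        ≤ ‖ContinuousLinearMap.adjoint A‖ * ‖a - b‖ :=
          (ContinuousLinearMap.adjoint A).le_opNorm _
      _ = ‖A‖ * ‖a - b‖ := by rw [ContinuousLinearMap.adjoint.norm_map A]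
  have key : ‖(x - lam • F a) - (y - lam • F b)‖ ^ 2 ≤ ‖x - y‖ ^ 2 := by
    have e : (x - lam • F a) - (y - lam • F b) = (x - y) - lam • (F a - F b) := by
      rw [smul_sub]; abel
    rw [e, norm_sub_sq_real, real_inner_smul_right, norm_smul, Real.norm_eq_abs,
      abs_of_pos hlam, mul_pow]
    have h1 : ‖F a - F b‖ ^ 2 ≤ ‖A‖ ^ 2 * ‖a - b‖ ^ 2 := by
      rw [← mul_pow]; exact pow_le_pow_left₀ (norm_nonneg _) hnormF 2
    have h2 : lam ^ 2 * ‖F a - F b‖ ^ 2 ≤ lam * ‖a - b‖ ^ 2 := by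
      have t1 : lam ^ 2 * ‖F a - F b‖ ^ 2 ≤ lam ^ 2 * (‖A‖ ^ 2 * ‖a - b‖ ^ 2) :=
        mul_le_mul_of_nonneg_left h1 (sq_nonneg lam)
      have t2 : lam * ‖A‖ ^ 2 * ‖a - b‖ ^ 2 ≤ 1 * ‖a - b‖ ^ 2 :=
        mul_le_mul_of_nonneg_right hlam' (sq_nonneg _)
      nlinarith [t1, mul_le_mul_of_nonneg_left t2 hlam.le]
    have h3 : ‖a - b‖ ^ 2 ≤ ⟪x - y, F a - F b⟫ := by
      rw [real_inner_comm]; exact hmono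
    nlinarith [mul_le_mul_of_nonneg_left h3 hlam.le, sq_nonneg ‖a - b‖, hlam.le]
  have := Real.sqrt_le_sqrt key
  rwa [Real.sqrt_sq (norm_nonneg _), Real.sqrt_sq (norm_nonneg _)] at this
end

section
/- Let x ∈ ℝⁿ with x ∉ {a₁,…,a_m}, and define the Weiszfeld operator T(x) = (∑_{i=1}^m ω_i a_i/‖x − a_i‖) / (∑_{i=1}^m ω_i/‖x − a_i‖) with all ω_i > 0. If x is a fixed point of T, then x is a minimizer of f(y) = ∑_{i=1}^m ω_i‖y − a_i‖ (the gradient of f at x vanishes). -/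
/-- A fixed point of the Weiszfeld operator
`T(x) = (∑ ωᵢaᵢ/‖x-aᵢ‖) / (∑ ωᵢ/‖x-aᵢ‖)`, at a point `x` distinct from all anchor
points, is a global minimizer of the Fermat–Weber objective `f(y) = ∑ ωᵢ‖y-aᵢ‖`. -/
theorem stmt_19 (n m : ℕ)
    (ω : Fin m → ℝ) (hω : ∀ i, 0 < ω i)
    (a : Fin m → EuclideanSpace ℝ (Fin n))
    (x : EuclideanSpace ℝ (Fin n)) (hx : ∀ i, x ≠ a i)
    (hfix : (∑ i, ω i / ‖x - a i‖)⁻¹ • (∑ i, (ω i / ‖x - a i‖) • a i) = x) :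
    ∀ y : EuclideanSpace ℝ (Fin n), ∑ i, ω i * ‖x - a i‖ ≤ ∑ i, ω i * ‖y - a i‖ := by
  intro y
  rcases Nat.eq_zero_or_pos m with hm | hm
  · subst hm; simp
  · have hxa : ∀ i, (0:ℝ) < ‖x - a i‖ := fun i => by
      rw [norm_pos_iff]; exact sub_ne_zero_of_ne (hx i)
    set c : Fin m → ℝ := fun i => ω i / ‖x - a i‖ with hc
    have hci : ∀ i, 0 < c i := fun i => div_pos (hω i) (hxa i)
    have hS : 0 < ∑ i, c i :=
      Finset.sum_pos (fun i _ => hci i)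
        (Finset.univ_nonempty_iff.mpr (Fin.pos_iff_nonempty.mp hm))
    have h1 : ∑ i, c i • a i = (∑ i, c i) • x := by
      rw [← hfix, smul_inv_smul₀ hS.ne']
    have hzero : ∑ i, c i • (x - a i) = 0 := by
      simp only [smul_sub, Finset.sum_sub_distrib, ← Finset.sum_smul, h1, sub_self]
    have key : ∀ i, ω i * ‖x - a i‖ + c i * inner ℝ (x - a i) (y - x) ≤ ω i * ‖y - a i‖ := by
      intro i
      have hcs : inner ℝ (x - a i) (y - a i) ≤ ‖x - a i‖ * ‖y - a i‖ :=
        real_inner_le_norm (x - a i) (y - a i)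
      have hi : (inner ℝ (x - a i) (y - x) : ℝ)
          = inner ℝ (x - a i) (y - a i) - ‖x - a i‖ ^ 2 := by
        have : y - x = (y - a i) - (x - a i) := by abel
        rw [this, inner_sub_right, real_inner_self_eq_norm_sq]
      rw [hi, hc]
      set r := ‖x - a i‖
      have hr := hxa i
      have hwi := hω i
      rw [div_mul_eq_mul_div, add_div' _ _ _ hr.ne', div_le_iff₀ hr]
      nlinarith [hcs, mul_le_mul_of_nonneg_left hcs hwi.le]
    calc ∑ i, ω i * ‖x - a i‖
        = ∑ i, (ω i * ‖x - a i‖ + c i * inner ℝ (x - a i) (y - x)) := by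
          rw [Finset.sum_add_distrib]
          have : ∑ i, c i * (inner ℝ (x - a i) (y - x) : ℝ)
              = inner ℝ (∑ i, c i • (x - a i)) (y - x) := by
            rw [sum_inner]
            simp [real_inner_smul_left, Finset.mul_sum, mul_assoc]
          rw [this, hzero, inner_zero_left, add_zero]
      _ ≤ ∑ i, ω i * ‖y - a i‖ := Finset.sum_le_sum fun i _ => key i
end
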